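/- arXiv:2307.04385 — 2 statements merged into one kernel-verified Lean document; each statement's English description precedes it below -/
import Mathlib

section
/- Let T : ℕ → ℝ satisfy T 4 = 4 and, for every j ≥ 5, T j ≥ T (j-1) + 1 + Real.logb 2 ((j / 2 : ℕ) : ℝ), where j / 2 denotes natural number (floor) division. Then for every k ≥ 8, T k ≥ ((k : ℝ) / 2) * Real.logb 2 ((k : ℝ) / 4 - 1). In particular, any sequence satisfying this recurrence is Ω(k log k). -/
theorem spiral_recurrence_lower_bound (T : ℕ → ℝ)
    (h4 : T 4 = 4)
    (hrec : ∀ j, 5 ≤ j → T j ≥ T (j - 1) + 1 + Real.logb 2 ((j / 2 : ℕ) : ℝ)) :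
    ∀ k, 8 ≤ k → T k ≥ ((k : ℝ) / 2) * Real.logb 2 ((k : ℝ) / 4 - 1) := by
  have key : ∀ n, 4 ≤ n →
      T n ≥ 4 + ∑ j ∈ Finset.Icc 5 n, (1 + Real.logb 2 ((j / 2 : ℕ) : ℝ)) := by
    intro n hn
    induction n, hn using Nat.le_induction with
    | base => simp [h4]
    | succ n hn ih =>
      have h := hrec (n + 1) (by omega)
      have hins : Finset.Icc 5 (n + 1) = insert (n + 1) (Finset.Icc 5 n) := by
        rw [← Finset.insert_Icc_right_eq_Icc_add_one (by omega : 5 ≤ n + 1)]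
      rw [hins, Finset.sum_insert (by simp)]
      simp only [Nat.add_sub_cancel] at h
      linarith
  intro k hk
  have hk8 : (8 : ℝ) ≤ (k : ℝ) := by exact_mod_cast hk
  set L := Real.logb 2 ((k : ℝ) / 4 - 1) with hLdef
  have hL0 : 0 ≤ L := Real.logb_nonneg (by norm_num) (by linarith)
  have hsub : Finset.Icc (k / 2 + 1) k ⊆ Finset.Icc 5 k := by
    intro j hj; simp only [Finset.mem_Icc] at *; omega
  have hterm_nonneg : ∀ j ∈ Finset.Icc 5 k, 0 ≤ 1 + Real.logb 2 ((j / 2 : ℕ) : ℝ) := by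
    intro j hj
    simp only [Finset.mem_Icc] at hj
    have h2j : (1 : ℝ) ≤ ((j / 2 : ℕ) : ℝ) := by
      have : 2 ≤ j / 2 := by omega
      exact_mod_cast le_trans (by norm_num) this
    have := Real.logb_nonneg (b := 2) (by norm_num) h2j
    linarith
  have h1 : ∑ j ∈ Finset.Icc (k / 2 + 1) k, (1 + Real.logb 2 ((j / 2 : ℕ) : ℝ)) ≤
      ∑ j ∈ Finset.Icc 5 k, (1 + Real.logb 2 ((j / 2 : ℕ) : ℝ)) :=
    Finset.sum_le_sum_of_subset_of_nonneg hsub (fun j hj _ => hterm_nonneg j hj)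
  have h2 : ∀ j ∈ Finset.Icc (k / 2 + 1) k, L ≤ 1 + Real.logb 2 ((j / 2 : ℕ) : ℝ) := by
    intro j hj
    simp only [Finset.mem_Icc] at hj
    have hnat : k ≤ 4 * (j / 2) + 4 := by omega
    have hcast : (k : ℝ) ≤ 4 * ((j / 2 : ℕ) : ℝ) + 4 := by exact_mod_cast hnat
    have hge : (k : ℝ) / 4 - 1 ≤ ((j / 2 : ℕ) : ℝ) := by linarith
    have hpos : (0 : ℝ) < (k : ℝ) / 4 - 1 := by linarith
    have hmono : L ≤ Real.logb 2 ((j / 2 : ℕ) : ℝ) :=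
      Real.logb_le_logb_of_le (by norm_num) hpos hge
    linarith
  have h3 : ∑ j ∈ Finset.Icc (k / 2 + 1) k, L ≤
      ∑ j ∈ Finset.Icc (k / 2 + 1) k, (1 + Real.logb 2 ((j / 2 : ℕ) : ℝ)) :=
    Finset.sum_le_sum h2
  rw [Finset.sum_const, Nat.card_Icc] at h3
  have hcard : k + 1 - (k / 2 + 1) = k - k / 2 := by omega
  rw [hcard] at h3
  have hhalf : (k : ℝ) / 2 ≤ ((k - k / 2 : ℕ) : ℝ) := by
    have : k ≤ 2 * (k - k / 2) := by omega
    have := (by exact_mod_cast this : (k : ℝ) ≤ 2 * ((k - k / 2 : ℕ) : ℝ))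
    linarith
  have h5 : ((k : ℝ) / 2) * L ≤ ((k - k / 2 : ℕ) : ℝ) * L :=
    mul_le_mul_of_nonneg_right hhalf hL0
  have h6 : ((k - k / 2 : ℕ) : ℝ) * L = (k - k / 2 : ℕ) • L := by
    rw [nsmul_eq_mul]
  have hT := key k (by omega)
  calc ((k : ℝ) / 2) * L ≤ (k - k / 2 : ℕ) • L := by rw [← h6]; exact h5
    _ ≤ ∑ j ∈ Finset.Icc (k / 2 + 1) k, (1 + Real.logb 2 ((j / 2 : ℕ) : ℝ)) := h3
    _ ≤ ∑ j ∈ Finset.Icc 5 k, (1 + Real.logb 2 ((j / 2 : ℕ) : ℝ)) := h1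
    _ ≤ T k := by linarith
end

section
/- For every natural number k ≥ 8, the sum ∑_{j=5}^{k} Real.logb 2 ((j / 2 : ℕ) : ℝ), where j / 2 denotes natural number (floor) division and the sum ranges over the integers j with 5 ≤ j ≤ k, is at least ((k : ℝ) / 2) * Real.logb 2 ((k : ℝ) / 4 - 1). -/
theorem sum_logb_floor_half_lower_bound (k : ℕ) (hk : 8 ≤ k) :
    ((k : ℝ) / 2) * Real.logb 2 ((k : ℝ) / 4 - 1) ≤
      ∑ j ∈ Finset.Icc 5 k, Real.logb 2 ((j / 2 : ℕ) : ℝ) := by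
  set m : ℕ := max 5 ((k + 1) / 2) with hm
  have hmcases : m = 5 ∨ m = (k + 1) / 2 := by
    rcases le_total 5 ((k + 1) / 2) with h | h
    · right; exact max_eq_right h
    · left; exact max_eq_left h
  have hm5 : 5 ≤ m := le_max_left _ _
  have hmhalf : (k + 1) / 2 ≤ m := le_max_right _ _
  have hmk : m ≤ k := by omega
  set L : ℝ := Real.logb 2 ((k : ℝ) / 4 - 1) with hL
  have hk8 : (8 : ℝ) ≤ (k : ℝ) := by exact_mod_cast hk
  have hx1 : (1 : ℝ) ≤ (k : ℝ) / 4 - 1 := by linarith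
  have hL0 : 0 ≤ L := Real.logb_nonneg one_lt_two hx1
  -- each term in Icc m k is ≥ L
  have hterm : ∀ j ∈ Finset.Icc m k, L ≤ Real.logb 2 ((j / 2 : ℕ) : ℝ) := by
    intro j hj
    rw [Finset.mem_Icc] at hj
    have h4 : k ≤ 4 * (j / 2) + 4 := by omega
    have h4' : (k : ℝ) ≤ 4 * ((j / 2 : ℕ) : ℝ) + 4 := by exact_mod_cast h4
    have hxy : (k : ℝ) / 4 - 1 ≤ ((j / 2 : ℕ) : ℝ) := by linarith
    exact Real.logb_le_logb_of_le one_lt_two (by linarith) hxy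
  have h2 : (Finset.Icc m k).card • L ≤ ∑ j ∈ Finset.Icc m k,
      Real.logb 2 ((j / 2 : ℕ) : ℝ) := Finset.card_nsmul_le_sum _ _ _ hterm
  -- sum over subset
  have hsub : Finset.Icc m k ⊆ Finset.Icc 5 k := by
    intro x hx
    rw [Finset.mem_Icc] at *
    omega
  have hnonneg : ∀ j ∈ Finset.Icc 5 k, j ∉ Finset.Icc m k →
      0 ≤ Real.logb 2 ((j / 2 : ℕ) : ℝ) := by
    intro j hj _
    rw [Finset.mem_Icc] at hj
    have : (2 : ℕ) ≤ j / 2 := by omega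
    have : (2 : ℝ) ≤ ((j / 2 : ℕ) : ℝ) := by exact_mod_cast this
    exact Real.logb_nonneg one_lt_two (by linarith)
  have h1 : ∑ j ∈ Finset.Icc m k, Real.logb 2 ((j / 2 : ℕ) : ℝ) ≤
      ∑ j ∈ Finset.Icc 5 k, Real.logb 2 ((j / 2 : ℕ) : ℝ) :=
    Finset.sum_le_sum_of_subset_of_nonneg hsub hnonneg
  -- card bound
  have hcardnat : k ≤ 2 * (Finset.Icc m k).card := by
    rw [Nat.card_Icc]
    omega
  have hcard : (k : ℝ) / 2 ≤ ((Finset.Icc m k).card : ℝ) := by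
    have : (k : ℝ) ≤ 2 * ((Finset.Icc m k).card : ℝ) := by exact_mod_cast hcardnat
    linarith
  calc ((k : ℝ) / 2) * L ≤ ((Finset.Icc m k).card : ℝ) * L :=
        mul_le_mul_of_nonneg_right hcard hL0
    _ = (Finset.Icc m k).card • L := (nsmul_eq_mul _ _).symm
    _ ≤ _ := le_trans h2 h1
end
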